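/- Let T1, T2, Z be real random variables, with Z standard normal and independent of T1, and suppose sup_{t∈ℝ} |P(T2 > t | T1 = x) − Q(t)| ≤ ε for almost every x (in the sense that T2 given T1 is within ε of normal uniformly, with T2 independent of T1). Let f be nonnegative and increasing in each coordinate, and define M = sign(T1 T2) f(|T1|, |T2|) and M' = sign(T1 Z) f(|T1|, |Z|). Then for every t, |P(M > t) − P(M' > t)| ≤ 2ε. -/

import Mathlib

open MeasureTheory ProbabilityTheory Set Filter Topology

lemma measurable_realSign : Measurable Real.sign := by
  have : Real.sign = fun r : ℝ => if r < 0 then (-1 : ℝ) else if 0 < r then 1 else 0 := by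
    funext r; rfl
  rw [this]
  exact Measurable.ite (measurableSet_lt measurable_id measurable_const) measurable_const
    (Measurable.ite (measurableSet_lt measurable_const measurable_id) measurable_const
      measurable_const)

lemma gauss_singleton (a : ℝ) : gaussianReal 0 1 {a} = 0 := by
  rw [gaussianReal_of_var_ne_zero 0 one_ne_zero]
  exact (withDensity_absolutelyContinuous _ _) (measure_singleton a)

lemma Q_tendsto (a : ℝ) (Q : ℝ → ℝ)
    (hQ : ∀ s, Q s = ((gaussianReal 0 1) (Set.Ioi s)).toReal) :
    Tendsto (fun n : ℕ => Q (a - 1 / (n + 1))) atTop (𝓝 (Q a)) := by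
  set γ := gaussianReal 0 1
  have hpos : ∀ n : ℕ, (0 : ℝ) < 1 / (n + 1) := fun n => by positivity
  have hsplit : ∀ n : ℕ, Q (a - 1 / (n + 1)) = Q a + (γ (Set.Ioc (a - 1 / (n + 1)) a)).toReal := by
    intro n
    have hle : a - 1 / (n + 1) ≤ a := by linarith [hpos n]
    have hunion : Set.Ioc (a - 1 / (n + 1)) a ∪ Set.Ioi a = Set.Ioi (a - 1 / (n + 1)) :=
      Set.Ioc_union_Ioi_eq_Ioi hle
    have hdisj : Disjoint (Set.Ioc (a - 1 / (n + 1)) a) (Set.Ioi a) := by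
      rw [Set.disjoint_left]; intro y hy hy'; exact absurd hy.2 (not_le.mpr hy')
    have : γ (Set.Ioi (a - 1 / (n + 1))) = γ (Set.Ioc (a - 1 / (n + 1)) a) + γ (Set.Ioi a) := by
      rw [← hunion, measure_union hdisj measurableSet_Ioi]
    rw [hQ, hQ, this, ENNReal.toReal_add (measure_ne_top _ _) (measure_ne_top _ _)]
    ring
  have hinter : (⋂ n : ℕ, Set.Ioc (a - 1 / (n + 1)) a) = {a} := by
    ext y
    simp only [Set.mem_iInter, Set.mem_Ioc, Set.mem_singleton_iff]
    constructor
    · intro h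
      have hya : y ≤ a := (h 0).2
      rcases eq_or_lt_of_le hya with h' | h'
      · exact h'
      · exfalso
        obtain ⟨n, hn⟩ := exists_nat_one_div_lt (sub_pos.2 h')
        have := (h n).1
        push_cast at hn this
        linarith
    · rintro rfl
      exact fun n => ⟨by linarith [hpos n], le_rfl⟩
  have hanti : Antitone fun n : ℕ => Set.Ioc (a - 1 / (n + 1)) a := by
    intro n m hnm
    apply Set.Ioc_subset_Ioc _ le_rfl
    have : (1 : ℝ) / (m + 1) ≤ 1 / (n + 1) := by
      apply one_div_le_one_div_of_le (by positivity)
      exact_mod_cast by omega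
    linarith
  have htend : Tendsto (fun n : ℕ => γ (Set.Ioc (a - 1 / (n + 1)) a)) atTop (𝓝 0) := by
    have := tendsto_measure_iInter_atTop (μ := γ)
      (s := fun n : ℕ => Set.Ioc (a - 1 / (n + 1)) a)
      (fun n => measurableSet_Ioc.nullMeasurableSet) hanti ⟨0, measure_ne_top _ _⟩
    rw [hinter, show γ {a} = 0 from gauss_singleton a] at this
    simpa [Function.comp_def] using this
  have htendR : Tendsto (fun n : ℕ => (γ (Set.Ioc (a - 1 / (n + 1)) a)).toReal) atTop (𝓝 0) := by
    have := (ENNReal.tendsto_toReal (a := 0) (by simp)).comp htend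
    simpa [Function.comp_def] using this
  have : Tendsto (fun n : ℕ => Q a + (γ (Set.Ioc (a - 1 / (n + 1)) a)).toReal) atTop
      (𝓝 (Q a + 0)) := tendsto_const_nhds.add htendR
  rw [add_zero] at this
  exact this.congr fun n => (hsplit n).symm

lemma Ici_bound (μ2 : Measure ℝ) [IsProbabilityMeasure μ2]
    (Q : ℝ → ℝ) (hQ : ∀ s, Q s = ((gaussianReal 0 1) (Set.Ioi s)).toReal)
    (ε : ℝ) (happrox : ∀ s, |(μ2 (Set.Ioi s)).toReal - Q s| ≤ ε) (a : ℝ) :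
    (μ2 (Set.Ici a)).toReal ≤ Q a + ε := by
  have hpos : ∀ n : ℕ, (0 : ℝ) < 1 / (n + 1) := fun n => by positivity
  have hb : ∀ n : ℕ, (μ2 (Set.Ici a)).toReal ≤ Q (a - 1 / (n + 1)) + ε := by
    intro n
    have hsub : Set.Ici a ⊆ Set.Ioi (a - 1 / (n + 1)) := fun y hy => by
      simp only [Set.mem_Ioi]; have : a ≤ y := hy; linarith [hpos n]
    have h1 : (μ2 (Set.Ici a)).toReal ≤ (μ2 (Set.Ioi (a - 1 / (n + 1)))).toReal :=
      ENNReal.toReal_mono (measure_ne_top _ _) (measure_mono hsub)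
    have h2 := abs_le.mp (happrox (a - 1 / (n + 1)))
    linarith [h2.2]
  have htend : Tendsto (fun n : ℕ => Q (a - 1 / (n + 1)) + ε) atTop (𝓝 (Q a + ε)) :=
    (Q_tendsto a Q hQ).add tendsto_const_nhds
  exact ge_of_tendsto' htend hb

lemma upperSet_tail_bound (μ2 : Measure ℝ) [IsProbabilityMeasure μ2]
    (Q : ℝ → ℝ) (hQ : ∀ s, Q s = ((gaussianReal 0 1) (Set.Ioi s)).toReal)
    (ε : ℝ) (hε : 0 ≤ ε) (happrox : ∀ s, |(μ2 (Set.Ioi s)).toReal - Q s| ≤ ε)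
    (S : Set ℝ) (hS : IsUpperSet S) :
    |(μ2 S).toReal - ((gaussianReal 0 1) S).toReal| ≤ ε := by
  set γ := gaussianReal 0 1
  rcases Set.eq_empty_or_nonempty S with rfl | hne
  · simpa using hε
  by_cases huniv : S = Set.univ
  · subst huniv
    simp [measure_univ, hε]
  -- S nonempty, proper, upper set
  obtain ⟨c, hc⟩ : ∃ c, c ∉ S := by
    by_contra h
    push_neg at h
    exact huniv (Set.eq_univ_of_forall h)
  have hbdd : BddBelow S := ⟨c, fun s hs => by
    by_contra h
    exact hc (hS (le_of_not_ge h) hs)⟩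
  set a := sInf S with ha
  have hIoi : Set.Ioi a ⊆ S := by
    intro y hy
    obtain ⟨s, hsS, hsy⟩ := exists_lt_of_csInf_lt hne hy
    exact hS hsy.le hsS
  have hIci : S ⊆ Set.Ici a := fun s hs => csInf_le hbdd hs
  -- gaussian part
  have hγIci : γ (Set.Ici a) ≤ γ (Set.Ioi a) := by
    have : Set.Ici a = insert a (Set.Ioi a) := by
      ext y; simp [Set.mem_Ici, Set.mem_Ioi, le_iff_lt_or_eq, or_comm, eq_comm]
    rw [this]
    calc γ (insert a (Set.Ioi a)) ≤ γ {a} + γ (Set.Ioi a) := by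
          rw [← Set.singleton_union]; exact measure_union_le _ _
      _ = γ (Set.Ioi a) := by rw [gauss_singleton a, zero_add]
  have hγS : (γ S).toReal = Q a := by
    have h1 : γ S ≤ γ (Set.Ioi a) := le_trans (measure_mono hIci) hγIci
    have h2 : γ (Set.Ioi a) ≤ γ S := measure_mono hIoi
    rw [hQ, le_antisymm h1 h2]
  -- μ2 part
  have hlow : Q a - ε ≤ (μ2 S).toReal := by
    have h1 : (μ2 (Set.Ioi a)).toReal ≤ (μ2 S).toReal :=
      ENNReal.toReal_mono (measure_ne_top _ _) (measure_mono hIoi)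
    have h2 := abs_le.mp (happrox a)
    linarith [h2.1]
  have hhigh : (μ2 S).toReal ≤ Q a + ε := by
    have h1 : (μ2 S).toReal ≤ (μ2 (Set.Ici a)).toReal :=
      ENNReal.toReal_mono (measure_ne_top _ _) (measure_mono hIci)
    exact h1.trans (Ici_bound μ2 Q hQ ε happrox a)
  rw [hγS, abs_le]
  constructor <;> linarith

lemma mono_section (f : ℝ → ℝ → ℝ) (hfnonneg : ∀ u v, 0 ≤ u → 0 ≤ v → 0 ≤ f u v)
    (hfmono2 : ∀ u, MonotoneOn (fun v => f u v) (Set.Ici 0))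
    {x : ℝ} (hx : 0 < x) :
    Monotone (fun y : ℝ => Real.sign (x * y) * f |x| |y|) := by
  intro y y' h
  simp only
  have hfx : ∀ v, 0 ≤ v → 0 ≤ f |x| v := fun v hv => hfnonneg _ v (abs_nonneg x) hv
  rcases lt_trichotomy y 0 with hy | hy | hy
  · have h1 : Real.sign (x * y) = -1 := Real.sign_of_neg (mul_neg_of_pos_of_neg hx hy)
    rcases lt_trichotomy y' 0 with hy' | hy' | hy'
    · have h2 : Real.sign (x * y') = -1 := Real.sign_of_neg (mul_neg_of_pos_of_neg hx hy')
      rw [h1, h2, neg_one_mul, neg_one_mul, neg_le_neg_iff]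
      exact hfmono2 |x| (Set.mem_Ici.mpr (abs_nonneg y')) (Set.mem_Ici.mpr (abs_nonneg y))
        (by rw [abs_of_neg hy, abs_of_neg hy']; linarith)
    · subst hy'
      rw [mul_zero, Real.sign_zero, zero_mul, h1, neg_one_mul]
      exact neg_nonpos.mpr (hfx _ (abs_nonneg y))
    · have h2 : Real.sign (x * y') = 1 := Real.sign_of_pos (mul_pos hx hy')
      rw [h1, h2, neg_one_mul, one_mul]
      exact le_trans (neg_nonpos.mpr (hfx _ (abs_nonneg y))) (hfx _ (abs_nonneg y'))
  · subst hy
    rw [mul_zero, Real.sign_zero, zero_mul]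
    rcases eq_or_lt_of_le h with h' | h'
    · rw [← h', mul_zero, Real.sign_zero, zero_mul]
    · have h2 : Real.sign (x * y') = 1 := Real.sign_of_pos (mul_pos hx h')
      rw [h2, one_mul]
      exact hfx _ (abs_nonneg y')
  · have hy' : 0 < y' := lt_of_lt_of_le hy h
    have h1 : Real.sign (x * y) = 1 := Real.sign_of_pos (mul_pos hx hy)
    have h2 : Real.sign (x * y') = 1 := Real.sign_of_pos (mul_pos hx hy')
    rw [h1, h2, one_mul, one_mul]
    exact hfmono2 |x| (Set.mem_Ici.mpr (abs_nonneg y)) (Set.mem_Ici.mpr (abs_nonneg y'))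
      (by rw [abs_of_pos hy, abs_of_pos hy']; exact h)

lemma anti_section (f : ℝ → ℝ → ℝ) (hfnonneg : ∀ u v, 0 ≤ u → 0 ≤ v → 0 ≤ f u v)
    (hfmono2 : ∀ u, MonotoneOn (fun v => f u v) (Set.Ici 0))
    {x : ℝ} (hx : x < 0) :
    Antitone (fun y : ℝ => Real.sign (x * y) * f |x| |y|) := by
  have hmono := mono_section f hfnonneg hfmono2 (neg_pos.mpr hx)
  intro y y' h
  have e : ∀ z : ℝ, Real.sign (x * z) * f |x| |z| = Real.sign (-x * -z) * f |(-x)| |(-z)| := by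
    intro z; rw [neg_mul_neg, abs_neg, abs_neg]
  simp only
  rw [e y, e y']
  exact hmono (neg_le_neg h)

/-- If `T2` is independent of `T1` with survival function uniformly within `ε` of the standard
normal survival function `Q`, and `Z` is standard normal independent of `T1`, then replacing
`T2` by `Z` in the mirror statistic changes tail probabilities by at most `2ε`. -/
theorem mirror_statistic_tail_replacement
    {Ω : Type*} [MeasurableSpace Ω] (P : Measure Ω) [IsProbabilityMeasure P]
    (T1 T2 Z : Ω → ℝ) (hT1 : Measurable T1) (hT2 : Measurable T2) (hZ : Measurable Z)
    (hZlaw : Measure.map Z P = gaussianReal 0 1)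
    (hindepT : IndepFun T1 T2 P) (hindepZ : IndepFun T1 Z P)
    (Q : ℝ → ℝ) (hQ : ∀ s, Q s = 1 - cdf (gaussianReal 0 1) s)
    (ε : ℝ) (hε : 0 ≤ ε)
    (happrox : ∀ s : ℝ, |(P {ω | T2 ω > s}).toReal - Q s| ≤ ε)
    (f : ℝ → ℝ → ℝ) (hfnonneg : ∀ u v, 0 ≤ u → 0 ≤ v → 0 ≤ f u v)
    (hfmono1 : ∀ v, MonotoneOn (fun u => f u v) (Set.Ici 0))
    (hfmono2 : ∀ u, MonotoneOn (fun v => f u v) (Set.Ici 0))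
    (hfmeas : Measurable fun uv : ℝ × ℝ => f uv.1 uv.2)
    (M M' : Ω → ℝ)
    (hM : ∀ ω, M ω = Real.sign (T1 ω * T2 ω) * f |T1 ω| |T2 ω|)
    (hM' : ∀ ω, M' ω = Real.sign (T1 ω * Z ω) * f |T1 ω| |Z ω|) :
    ∀ t : ℝ, |(P {ω | M ω > t}).toReal - (P {ω | M' ω > t}).toReal| ≤ 2 * ε := by
  intro t
  set γ := gaussianReal 0 1 with hγ
  set μ1 := P.map T1 with hμ1
  set μ2 := P.map T2 with hμ2
  haveI : IsProbabilityMeasure μ1 := Measure.isProbabilityMeasure_map hT1.aemeasurable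
  haveI : IsProbabilityMeasure μ2 := Measure.isProbabilityMeasure_map hT2.aemeasurable
  -- Q in terms of the gaussian survival function
  have hQ' : ∀ s, Q s = (γ (Set.Ioi s)).toReal := by
    intro s
    have h1 : cdf γ s = (γ (Set.Iic s)).toReal := cdf_eq_real γ s
    have h2 : γ (Set.Iic s)ᶜ = 1 - γ (Set.Iic s) := prob_compl_eq_one_sub measurableSet_Iic
    rw [Set.compl_Iic] at h2
    rw [hQ, h1, h2, ENNReal.toReal_sub_of_le prob_le_one ENNReal.one_ne_top, ENNReal.toReal_one]
  -- survival approximation in terms of μ2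
  have happrox' : ∀ s, |(μ2 (Set.Ioi s)).toReal - Q s| ≤ ε := by
    intro s
    have : μ2 (Set.Ioi s) = P {ω | T2 ω > s} := by
      rw [hμ2, Measure.map_apply hT2 measurableSet_Ioi]
      rfl
    rw [this]; exact happrox s
  -- the measurable set in the plane
  set A : Set (ℝ × ℝ) := {p | Real.sign (p.1 * p.2) * f |p.1| |p.2| > t} with hA
  have hAmeas : MeasurableSet A := by
    have hg : Measurable fun p : ℝ × ℝ => Real.sign (p.1 * p.2) * f |p.1| |p.2| :=
      (measurable_realSign.comp (measurable_fst.mul measurable_snd)).mul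
        (hfmeas.comp ((measurable_fst.abs).prodMk (measurable_snd.abs)))
    exact measurableSet_lt measurable_const hg
  -- rewrite the two probabilities as integrals over μ1
  have hP2 : P {ω | M ω > t} = ∫⁻ x, μ2 (Prod.mk x ⁻¹' A) ∂μ1 := by
    have hset : {ω | M ω > t} = (fun ω => (T1 ω, T2 ω)) ⁻¹' A := by
      ext ω; simp only [Set.mem_setOf_eq, Set.mem_preimage, hA, hM ω, gt_iff_lt]
    have hmap : P.map (fun ω => (T1 ω, T2 ω)) = μ1.prod μ2 :=
      (indepFun_iff_map_prod_eq_prod_map_map hT1.aemeasurable hT2.aemeasurable).mp hindepT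
    rw [hset, ← Measure.map_apply (hT1.prodMk hT2) hAmeas, hmap, Measure.prod_apply hAmeas]
  have hPZ : P {ω | M' ω > t} = ∫⁻ x, γ (Prod.mk x ⁻¹' A) ∂μ1 := by
    have hset : {ω | M' ω > t} = (fun ω => (T1 ω, Z ω)) ⁻¹' A := by
      ext ω; simp only [Set.mem_setOf_eq, Set.mem_preimage, hA, hM' ω, gt_iff_lt]
    have hmap : P.map (fun ω => (T1 ω, Z ω)) = μ1.prod γ := by
      rw [(indepFun_iff_map_prod_eq_prod_map_map hT1.aemeasurable hZ.aemeasurable).mp hindepZ,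
        hZlaw]
    rw [hset, ← Measure.map_apply (hT1.prodMk hZ) hAmeas, hmap, Measure.prod_apply hAmeas]
  -- real-valued section functions
  set g2 : ℝ → ℝ := fun x => (μ2 (Prod.mk x ⁻¹' A)).toReal with hg2
  set gZ : ℝ → ℝ := fun x => (γ (Prod.mk x ⁻¹' A)).toReal with hgZ
  have hint2meas : Measurable g2 := (measurable_measure_prodMk_left hAmeas).ennreal_toReal
  have hintZmeas : Measurable gZ := (measurable_measure_prodMk_left hAmeas).ennreal_toReal
  have hI2 : (P {ω | M ω > t}).toReal = ∫ x, g2 x ∂μ1 := by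
    rw [hP2, ← integral_toReal (measurable_measure_prodMk_left hAmeas).aemeasurable
      (ae_of_all _ fun x => measure_lt_top μ2 _)]
  have hIZ : (P {ω | M' ω > t}).toReal = ∫ x, gZ x ∂μ1 := by
    rw [hPZ, ← integral_toReal (measurable_measure_prodMk_left hAmeas).aemeasurable
      (ae_of_all _ fun x => measure_lt_top γ _)]
  -- pointwise bound on sections
  have hsec : ∀ x : ℝ, Prod.mk x ⁻¹' A = {y : ℝ | Real.sign (x * y) * f |x| |y| > t} := by
    intro x; ext y; simp [hA]
  have hpt : ∀ x : ℝ, |g2 x - gZ x| ≤ ε := by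
    intro x
    rcases lt_trichotomy x 0 with hx | hx | hx
    · -- antitone section: lower set, use complement
      set S := Prod.mk x ⁻¹' A with hSdef
      have hSm : MeasurableSet S := measurable_prodMk_left hAmeas
      have hlower : IsLowerSet S := by
        rw [hSdef, hsec x]
        intro b a hab hb
        exact lt_of_lt_of_le hb (anti_section f hfnonneg hfmono2 hx hab)
      have hupper : IsUpperSet Sᶜ := hlower.compl
      have hb := upperSet_tail_bound μ2 Q hQ' ε hε happrox' Sᶜ hupper
      have h2 : (μ2 Sᶜ).toReal = 1 - (μ2 S).toReal := by
        rw [prob_compl_eq_one_sub hSm,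
          ENNReal.toReal_sub_of_le prob_le_one ENNReal.one_ne_top, ENNReal.toReal_one]
      have hz : (γ Sᶜ).toReal = 1 - (γ S).toReal := by
        rw [prob_compl_eq_one_sub hSm,
          ENNReal.toReal_sub_of_le prob_le_one ENNReal.one_ne_top, ENNReal.toReal_one]
      rw [h2, hz] at hb
      calc |g2 x - gZ x| = |(1 - (μ2 S).toReal) - (1 - (γ S).toReal)| := by
            rw [hg2, hgZ]; simp only; rw [abs_sub_comm]; rw [hSdef]; ring_nf
        _ ≤ ε := hb
    · -- x = 0 : section is trivial
      subst hx
      have : Prod.mk (0:ℝ) ⁻¹' A = {y : ℝ | t < 0} := by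
        rw [hsec 0]
        ext y
        simp [Real.sign_zero]
      rw [hg2, hgZ]
      simp only [this]
      by_cases ht : t < 0
      · have : {y : ℝ | t < 0} = Set.univ := by ext y; simpa using ht
        rw [this]
        simp [measure_univ, hε]
      · have : {y : ℝ | t < 0} = (∅ : Set ℝ) := by ext y; simpa using ht
        rw [this]
        simpa using hε
    · -- monotone section : upper set
      have hupper : IsUpperSet (Prod.mk x ⁻¹' A) := by
        rw [hsec x]
        intro a b hab ha
        exact lt_of_lt_of_le ha (mono_section f hfnonneg hfmono2 hx hab)
      exact upperSet_tail_bound μ2 Q hQ' ε hε happrox' _ hupper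
  -- integrability
  have hbound2 : ∀ x, ‖g2 x‖ ≤ 1 := by
    intro x
    rw [Real.norm_eq_abs, abs_of_nonneg ENNReal.toReal_nonneg]
    exact ENNReal.toReal_le_of_le_ofReal one_pos.le (by simpa using prob_le_one)
  have hboundZ : ∀ x, ‖gZ x‖ ≤ 1 := by
    intro x
    rw [Real.norm_eq_abs, abs_of_nonneg ENNReal.toReal_nonneg]
    exact ENNReal.toReal_le_of_le_ofReal one_pos.le (by simpa using prob_le_one)
  have hint2 : Integrable g2 μ1 :=
    (integrable_const (1:ℝ)).mono' hint2meas.aestronglyMeasurable (ae_of_all _ hbound2)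
  have hintZ : Integrable gZ μ1 :=
    (integrable_const (1:ℝ)).mono' hintZmeas.aestronglyMeasurable (ae_of_all _ hboundZ)
  -- conclude
  rw [hI2, hIZ, ← integral_sub hint2 hintZ]
  calc |∫ x, (g2 x - gZ x) ∂μ1| ≤ ∫ x, |g2 x - gZ x| ∂μ1 := by
        simpa [Real.norm_eq_abs] using norm_integral_le_integral_norm (fun x => g2 x - gZ x) (μ := μ1)
    _ ≤ ∫ _x, ε ∂μ1 := integral_mono ((hint2.sub hintZ).abs) (integrable_const ε) hpt
    _ = ε := by simp [measure_univ]
    _ ≤ 2 * ε := by linarith
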